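/- arXiv:2310.03584 — 2 statements merged into one kernel-verified Lean document; each statement's English description precedes it below -/
import Mathlib

section
/- If D is a k-critical digraph, a = uv is an arc of D, and φ is an acyclic (k−1)-coloring of D − a, then there is a color c such that the subdigraph induced by the color class φ⁻¹(c) contains a directed path from v to u. -/
/-- A finite simple digraph with vertices drawn from `ℕ`:
no loops, no parallel arcs in the same direction (arcs form a relation),
but antiparallel arcs are allowed. -/
structure Digraph' where
  verts : Finset ℕ
  Adj : ℕ → ℕ → Prop
  adj_mem : ∀ ⦃u v⦄, Adj u v → u ∈ verts ∧ v ∈ verts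
  loopless : ∀ v, ¬ Adj v v

namespace Digraph'

/-- The order (number of vertices) of a digraph. -/
def order (D : Digraph') : ℕ := D.verts.card

/-- The number of arcs of a digraph. -/
noncomputable def numArcs (D : Digraph') : ℕ :=
  Nat.card {a : ℕ × ℕ // D.Adj a.1 a.2}

/-- The set `S` induces an acyclic subdigraph of `D` (no directed cycle inside `S`). -/
def AcyclicOn (D : Digraph') (S : Set ℕ) : Prop :=
  ∀ v, ¬ Relation.TransGen (fun a b => a ∈ S ∧ b ∈ S ∧ D.Adj a b) v v

/-- A digraph is acyclic if it contains no directed cycle. -/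
def IsAcyclic (D : Digraph') : Prop :=
  ∀ v, ¬ Relation.TransGen D.Adj v v

/-- `φ` is an acyclic `k`-coloring of `D`: it uses colors `< k` on the vertices and
every color class induces an acyclic subdigraph. -/
def IsAcyclicColoring (D : Digraph') (k : ℕ) (φ : ℕ → ℕ) : Prop :=
  (∀ v ∈ D.verts, φ v < k) ∧ ∀ c, D.AcyclicOn {v | v ∈ D.verts ∧ φ v = c}

/-- `D` admits an acyclic `k`-coloring. -/
def Colorable (D : Digraph') (k : ℕ) : Prop := ∃ φ, D.IsAcyclicColoring k φ

/-- The dichromatic number of `D`. -/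
noncomputable def dichrom (D : Digraph') : ℕ := sInf {k | D.Colorable k}

/-- `H` is a subdigraph of `D`. -/
def IsSubdigraph (H D : Digraph') : Prop :=
  H.verts ⊆ D.verts ∧ ∀ ⦃u v⦄, H.Adj u v → D.Adj u v

/-- `D` is critical: every proper subdigraph has a strictly smaller dichromatic number. -/
def Critical (D : Digraph') : Prop :=
  ∀ H, IsSubdigraph H D → H ≠ D → dichrom H < dichrom D

/-- `D` is `k`-critical. -/
def IsCritical (D : Digraph') (k : ℕ) : Prop := D.dichrom = k ∧ D.Critical

/-- The digraph obtained from `D` by deleting the vertex `x`. -/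
def delVert (D : Digraph') (x : ℕ) : Digraph' where
  verts := D.verts.erase x
  Adj u v := D.Adj u v ∧ u ≠ x ∧ v ≠ x
  adj_mem := by
    intro u v h
    rcases h with ⟨h, hu, hv⟩
    exact ⟨Finset.mem_erase.2 ⟨hu, (D.adj_mem h).1⟩, Finset.mem_erase.2 ⟨hv, (D.adj_mem h).2⟩⟩
  loopless := by intro v h; exact D.loopless v h.1

/-- The digraph obtained from `D` by deleting the arc `xy`. -/
def delArc (D : Digraph') (x y : ℕ) : Digraph' where
  verts := D.verts
  Adj u v := D.Adj u v ∧ ¬(u = x ∧ v = y)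
  adj_mem := by intro u v h; exact D.adj_mem h.1
  loopless := by intro v h; exact D.loopless v h.1

/-- The out-degree of `v` in `D`. -/
noncomputable def outDeg (D : Digraph') (v : ℕ) : ℕ := Nat.card {w // D.Adj v w}

/-- The in-degree of `v` in `D`. -/
noncomputable def inDeg (D : Digraph') (v : ℕ) : ℕ := Nat.card {w // D.Adj w v}

/-- `D` is the complete biorientation of a complete graph on its vertex set. -/
def IsBiorientedComplete (D : Digraph') : Prop :=
  ∀ u v, D.Adj u v ↔ (u ∈ D.verts ∧ v ∈ D.verts ∧ u ≠ v)

/-- `D` is a directed cycle (of length at least `2`; length `2` is a digon):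
every vertex has out-degree and in-degree one and `D` is strongly connected. -/
def IsDirectedCycle (D : Digraph') : Prop :=
  2 ≤ D.verts.card ∧
  (∀ v ∈ D.verts, D.outDeg v = 1 ∧ D.inDeg v = 1) ∧
  ∀ u ∈ D.verts, ∀ v ∈ D.verts, Relation.TransGen D.Adj u v

/-- `D` is the Dirac join of the disjoint digraphs `D₁` and `D₂`: the union of `D₁`
and `D₂` together with all arcs in both directions between them. -/
def IsDiracJoin (D D₁ D₂ : Digraph') : Prop :=
  Disjoint D₁.verts D₂.verts ∧
  D.verts = D₁.verts ∪ D₂.verts ∧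
  ∀ u v, D.Adj u v ↔ (D₁.Adj u v ∨ D₂.Adj u v ∨
    (u ∈ D₁.verts ∧ v ∈ D₂.verts) ∨ (u ∈ D₂.verts ∧ v ∈ D₁.verts))

/-- `v` is a dominating vertex of `D`: it is joined by arcs in both directions to
all other vertices of `D`. -/
def IsDominatingVertex (D : Digraph') (v : ℕ) : Prop :=
  v ∈ D.verts ∧ ∀ u ∈ D.verts, u ≠ v → D.Adj u v ∧ D.Adj v u

/-- The number of dominating vertices of `D`. -/
noncomputable def numDomVerts (D : Digraph') : ℕ :=
  {v | D.IsDominatingVertex v}.ncard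

/-- `C` is a dominating subdigraph of `D`. -/
def IsDominatingSubdigraph (D C : Digraph') : Prop :=
  ∃ D'' : Digraph', D''.verts.Nonempty ∧ IsDiracJoin D C D''

/-- The number of dominating directed cycles of order at least three of `D`. -/
noncomputable def numDomCycles (D : Digraph') : ℕ :=
  {C : Digraph' | IsSubdigraph C D ∧ C.IsDirectedCycle ∧ 3 ≤ C.order ∧
    D.IsDominatingSubdigraph C}.ncard

/-- The complement of `D` (on the same vertex set). -/
def compl (D : Digraph') : Digraph' where
  verts := D.verts
  Adj u v := u ∈ D.verts ∧ v ∈ D.verts ∧ u ≠ v ∧ ¬ D.Adj u v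
  adj_mem := by intro u v h; exact ⟨h.1, h.2.1⟩
  loopless := by intro v h; exact h.2.2.1 rfl

/-- `D` is connected (its underlying undirected graph is connected). -/
def Connected (D : Digraph') : Prop :=
  D.verts.Nonempty ∧ ∀ u ∈ D.verts, ∀ v ∈ D.verts,
    Relation.ReflTransGen (fun a b => D.Adj a b ∨ D.Adj b a) u v

/-- `φ` is a proper `k`-coloring of the symmetric digraph `D` viewed as a graph. -/
def IsProperColoring (D : Digraph') (k : ℕ) (φ : ℕ → ℕ) : Prop :=
  (∀ v ∈ D.verts, φ v < k) ∧ ∀ u v, D.Adj u v → φ u ≠ φ v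

/-- The chromatic number of (the underlying graph of) `D`. -/
noncomputable def chrom (D : Digraph') : ℕ := sInf {k | ∃ φ, D.IsProperColoring k φ}

/-- `D` belongs to the (complete biorientation of the) Gallai--Dirac class `DG(k)`. -/
def InDGClass (D : Digraph') (k : ℕ) : Prop :=
  ∃ (X Y₁ Y₂ : Finset ℕ) (v₁ v₂ : ℕ),
    X.Nonempty ∧ Y₁.Nonempty ∧ Y₂.Nonempty ∧
    Disjoint X Y₁ ∧ Disjoint X Y₂ ∧ Disjoint Y₁ Y₂ ∧
    v₁ ∉ X ∪ Y₁ ∪ Y₂ ∧ v₂ ∉ X ∪ Y₁ ∪ Y₂ ∧ v₁ ≠ v₂ ∧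
    Y₁.card + Y₂.card = k - 1 ∧ X.card + 1 = k - 1 ∧
    D.verts = X ∪ Y₁ ∪ Y₂ ∪ {v₁, v₂} ∧
    (∀ u v, D.Adj u v ↔ (u ≠ v ∧
      ((u ∈ X ∧ v ∈ X) ∨ (u ∈ Y₁ ∪ Y₂ ∧ v ∈ Y₁ ∪ Y₂) ∨
       (u = v₁ ∧ v ∈ X ∪ Y₁) ∨ (v = v₁ ∧ u ∈ X ∪ Y₁) ∨
       (u = v₂ ∧ v ∈ X ∪ Y₂) ∨ (v = v₂ ∧ u ∈ X ∪ Y₂))))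

end Digraph'

/-- The minimum number of arcs in a `k`-critical digraph of order `n`. -/
noncomputable def extArcs (k n : ℕ) : ℕ :=
  sInf {m | ∃ D : Digraph', D.IsCritical k ∧ D.order = n ∧ D.numArcs = m}

open Digraph'

private lemma split_cycle (D : Digraph') (u v : ℕ) (S : Set ℕ) {x y : ℕ}
    (h : Relation.TransGen (fun a b => a ∈ S ∧ b ∈ S ∧ D.Adj a b) x y) :
    Relation.TransGen (fun a b => a ∈ S ∧ b ∈ S ∧ (D.delArc u v).Adj a b) x y ∨
    (u ∈ S ∧ v ∈ S ∧
      Relation.ReflTransGen (fun a b => a ∈ S ∧ b ∈ S ∧ (D.delArc u v).Adj a b) x u ∧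
      Relation.ReflTransGen (fun a b => a ∈ S ∧ b ∈ S ∧ (D.delArc u v).Adj a b) v y) := by
  induction h with
  | @single b hs =>
    by_cases hxy : x = u ∧ b = v
    · exact Or.inr ⟨hxy.1 ▸ hs.1, hxy.2 ▸ hs.2.1,
        hxy.1 ▸ Relation.ReflTransGen.refl, hxy.2 ▸ Relation.ReflTransGen.refl⟩
    · exact Or.inl (Relation.TransGen.single ⟨hs.1, hs.2.1, hs.2.2, hxy⟩)
  | @tail b c hxb hs ih =>
    by_cases hxy : b = u ∧ c = v
    · rcases ih with ih | ⟨hu, hv, h1, h2⟩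
      · exact Or.inr ⟨hxy.1 ▸ hs.1, hxy.2 ▸ hs.2.1,
          hxy.1 ▸ ih.to_reflTransGen, hxy.2 ▸ Relation.ReflTransGen.refl⟩
      · exact Or.inr ⟨hu, hv, h1, hxy.2 ▸ Relation.ReflTransGen.refl⟩
    · have step : b ∈ S ∧ c ∈ S ∧ (D.delArc u v).Adj b c := ⟨hs.1, hs.2.1, hs.2.2, hxy⟩
      rcases ih with ih | ⟨hu, hv, h1, h2⟩
      · exact Or.inl (ih.tail step)
      · exact Or.inr ⟨hu, hv, h1, h2.tail step⟩


/-- If `D` is `k`-critical, `uv` is an arc of `D` and `φ` is an acyclic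
`(k-1)`-coloring of `D - uv`, then some color class induces a subdigraph of `D - uv`
containing a directed path from `v` to `u`. -/
theorem stmt5 (D : Digraph') (k : ℕ) (h : D.IsCritical k) (u v : ℕ) (ha : D.Adj u v)
    (φ : ℕ → ℕ) (hφ : (D.delArc u v).IsAcyclicColoring (k - 1) φ) :
    ∃ c, v ∈ D.verts ∧ φ v = c ∧ u ∈ D.verts ∧ φ u = c ∧
      Relation.ReflTransGen
        (fun a b => a ∈ D.verts ∧ φ a = c ∧ b ∈ D.verts ∧ φ b = c ∧ (D.delArc u v).Adj a b)
        v u := by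
  by_contra hcon
  -- `D - uv` is a proper subdigraph, so `k ≥ 1`
  have hsub : IsSubdigraph (D.delArc u v) D := ⟨subset_rfl, fun _ _ hadj => hadj.1⟩
  have hne : D.delArc u v ≠ D := by
    intro he
    have : (D.delArc u v).Adj u v := by rw [he]; exact ha
    exact this.2 ⟨rfl, rfl⟩
  have hk1 : 1 ≤ k := by
    have := h.2 _ hsub hne
    rw [h.1] at this
    omega
  -- φ is an acyclic (k-1)-coloring of D itself
  have hcol : D.Colorable (k - 1) := by
    refine ⟨φ, hφ.1, fun c w hw => ?_⟩
    rcases split_cycle D u v {x | x ∈ D.verts ∧ φ x = c} hw with hcyc | ⟨hu, hv, h1, h2⟩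
    · exact hφ.2 c w hcyc
    · refine hcon ⟨c, hv.1, hv.2, hu.1, hu.2, ?_⟩
      have path : Relation.ReflTransGen
          (fun a b => a ∈ ({x | x ∈ D.verts ∧ φ x = c} : Set ℕ) ∧
            b ∈ ({x | x ∈ D.verts ∧ φ x = c} : Set ℕ) ∧ (D.delArc u v).Adj a b) v u :=
        h2.trans h1
      exact Relation.ReflTransGen.mono (fun a b hab => ⟨hab.1.1, hab.1.2, hab.2.1.1, hab.2.1.2, hab.2.2⟩) v u path
  have : D.dichrom ≤ k - 1 := Nat.sInf_le hcol
  rw [h.1] at this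
  omega
end

section
/- The Dirac join D = D₁ ⊞ D₂ of two disjoint non-empty digraphs is critical if and only if both D₁ and D₂ are critical. -/
open Digraph'

namespace Digraph'

lemma ext' {H D : Digraph'} (h1 : H.verts = D.verts)
    (h2 : ∀ u v, H.Adj u v ↔ D.Adj u v) : H = D := by
  have h2' : H.Adj = D.Adj := funext fun u => funext fun v => propext (h2 u v)
  cases H; cases D
  simp only at h1 h2'
  subst h1; subst h2'
  rfl

lemma colorable_mono {D : Digraph'} {k k' : ℕ} (h : k ≤ k') (hc : D.Colorable k) :
    D.Colorable k' := by
  obtain ⟨φ, hp1, hp2⟩ := hc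
  exact ⟨φ, fun v hv => lt_of_lt_of_le (hp1 v hv) h, hp2⟩

lemma acyclicOn_of_subsingleton (D : Digraph') {S : Set ℕ} (h : S.Subsingleton) :
    D.AcyclicOn S := by
  intro v hv
  have key : ∀ a b, Relation.TransGen (fun a b => a ∈ S ∧ b ∈ S ∧ D.Adj a b) a b → False := by
    intro a b hab
    induction hab with
    | single hs =>
      obtain ⟨ha, hb, hadj⟩ := hs
      cases h ha hb
      exact D.loopless _ hadj
    | tail _ _ ih => exact ih
  exact key v v hv

lemma colorable_order (D : Digraph') : D.Colorable D.order := by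
  classical
  set l := D.verts.sort (· ≤ ·) with hl
  refine ⟨fun v => l.idxOf v, ?_, ?_⟩
  · intro v hv
    have hm : v ∈ l := (Finset.mem_sort _).2 hv
    simpa [Digraph'.order, hl, Finset.length_sort] using List.idxOf_lt_length_iff.2 hm
  · intro c
    apply acyclicOn_of_subsingleton
    intro a ha b hb
    obtain ⟨ha1, ha2⟩ := ha
    obtain ⟨hb1, hb2⟩ := hb
    have hma : a ∈ l := (Finset.mem_sort _).2 ha1
    have hmb : b ∈ l := (Finset.mem_sort _).2 hb1
    exact (List.idxOf_inj hma).1 ((ha2 : l.idxOf a = c).trans (hb2 : l.idxOf b = c).symm)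

lemma colorable_dichrom (D : Digraph') : D.Colorable D.dichrom := by
  have : D.dichrom ∈ {k | D.Colorable k} :=
    Nat.sInf_mem (⟨D.order, D.colorable_order⟩ : Set.Nonempty {k | D.Colorable k})
  exact this

lemma dichrom_le_of_colorable {D : Digraph'} {k : ℕ} (h : D.Colorable k) :
    D.dichrom ≤ k := Nat.sInf_le h

lemma colorable_of_dichrom_le {D : Digraph'} {k : ℕ} (h : D.dichrom ≤ k) :
    D.Colorable k := colorable_mono h D.colorable_dichrom

lemma one_le_dichrom {D : Digraph'} (h : D.verts.Nonempty) : 1 ≤ D.dichrom := by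
  obtain ⟨φ, hp1, _⟩ := D.colorable_dichrom
  obtain ⟨v, hv⟩ := h
  have := hp1 v hv
  omega

lemma dichrom_mono {H D : Digraph'} (h : IsSubdigraph H D) : H.dichrom ≤ D.dichrom := by
  apply dichrom_le_of_colorable
  obtain ⟨φ, hp1, hp2⟩ := D.colorable_dichrom
  refine ⟨φ, fun v hv => hp1 v (h.1 hv), fun c v hv => hp2 c v ?_⟩
  refine Relation.TransGen.mono ?_ _ _ hv
  rintro a b ⟨ha, hb, hadj⟩
  exact ⟨⟨h.1 ha.1, ha.2⟩, ⟨h.1 hb.1, hb.2⟩, h.2 hadj⟩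

lemma dichrom_le_card_image {D : Digraph'} {φ : ℕ → ℕ}
    (h2 : ∀ c, D.AcyclicOn {v | v ∈ D.verts ∧ φ v = c}) :
    D.dichrom ≤ (D.verts.image φ).card := by
  classical
  apply dichrom_le_of_colorable
  set l := (D.verts.image φ).sort (· ≤ ·) with hl
  refine ⟨fun v => l.idxOf (φ v), ?_, ?_⟩
  · intro v hv
    have hm : φ v ∈ l := (Finset.mem_sort _).2 (Finset.mem_image_of_mem φ hv)
    simpa [hl, Finset.length_sort] using List.idxOf_lt_length_iff.2 hm
  · intro c
    by_cases hc : c < l.length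
    · set d := l.get ⟨c, hc⟩ with hd
      intro v hv
      apply h2 d v
      refine Relation.TransGen.mono ?_ _ _ hv
      rintro a b ⟨⟨ha1, ha2⟩, ⟨hb1, hb2⟩, hadj⟩
      have key : ∀ w, w ∈ D.verts → l.idxOf (φ w) = c → φ w = d := by
        intro w hw hwc
        have hm : φ w ∈ l := (Finset.mem_sort _).2 (Finset.mem_image_of_mem φ hw)
        have := List.idxOf_get (a := φ w) (l := l) (by rw [hwc]; exact hc)
        rw [hd]
        rw [← this]
        congr 1
        exact Fin.ext hwc
      exact ⟨⟨ha1, key a ha1 ha2⟩, ⟨hb1, key b hb1 hb2⟩, hadj⟩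
    · apply acyclicOn_of_subsingleton
      intro a ha _ _
      exfalso
      obtain ⟨ha1, ha2⟩ := ha
      have hm : φ a ∈ l := (Finset.mem_sort _).2 (Finset.mem_image_of_mem φ ha1)
      have hlt := List.idxOf_lt_length_iff.2 hm
      have ha2' : l.idxOf (φ a) = c := ha2
      omega

lemma join_symm {D A B : Digraph'} (hJ : IsDiracJoin D A B) : IsDiracJoin D B A := by
  obtain ⟨h1, h2, h3⟩ := hJ
  refine ⟨h1.symm, by rw [h2, Finset.union_comm], fun u v => ?_⟩
  rw [h3]
  tauto

/-- The Dirac join of two disjoint digraphs. -/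
def mkJoin (A B : Digraph') (hdis : Disjoint A.verts B.verts) : Digraph' where
  verts := A.verts ∪ B.verts
  Adj u v := A.Adj u v ∨ B.Adj u v ∨ (u ∈ A.verts ∧ v ∈ B.verts) ∨ (u ∈ B.verts ∧ v ∈ A.verts)
  adj_mem := by
    rintro u v (h | h | ⟨hu, hv⟩ | ⟨hu, hv⟩)
    · exact ⟨Finset.mem_union_left _ (A.adj_mem h).1, Finset.mem_union_left _ (A.adj_mem h).2⟩
    · exact ⟨Finset.mem_union_right _ (B.adj_mem h).1, Finset.mem_union_right _ (B.adj_mem h).2⟩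
    · exact ⟨Finset.mem_union_left _ hu, Finset.mem_union_right _ hv⟩
    · exact ⟨Finset.mem_union_right _ hu, Finset.mem_union_left _ hv⟩
  loopless := by
    rintro v (h | h | ⟨hu, hv⟩ | ⟨hu, hv⟩)
    · exact A.loopless v h
    · exact B.loopless v h
    · exact Finset.disjoint_left.1 hdis hu hv
    · exact Finset.disjoint_left.1 hdis hv hu

lemma isDiracJoin_mkJoin (A B : Digraph') (hdis : Disjoint A.verts B.verts) :
    IsDiracJoin (mkJoin A B hdis) A B :=
  ⟨hdis, rfl, fun _ _ => Iff.rfl⟩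

lemma dichrom_join {D A B : Digraph'} (hJ : IsDiracJoin D A B) :
    D.dichrom = A.dichrom + B.dichrom := by
  obtain ⟨hdis, hverts, hadj⟩ := hJ
  have hAD : ∀ {v : ℕ}, v ∈ A.verts → v ∈ D.verts := fun hv => by
    rw [hverts]; exact Finset.mem_union_left _ hv
  have hBD : ∀ {v : ℕ}, v ∈ B.verts → v ∈ D.verts := fun hv => by
    rw [hverts]; exact Finset.mem_union_right _ hv
  apply le_antisymm
  · apply dichrom_le_of_colorable
    obtain ⟨φ₁, ha1, ha2⟩ := A.colorable_dichrom
    obtain ⟨φ₂, hb1, hb2⟩ := B.colorable_dichrom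
    classical
    refine ⟨fun v => if v ∈ A.verts then φ₁ v else A.dichrom + φ₂ v, ?_, ?_⟩
    · intro v hv
      by_cases h : v ∈ A.verts
      · simp only [h, if_true]
        have := ha1 v h
        omega
      · simp only [h, if_false]
        have hv2 : v ∈ B.verts := by
          rw [hverts] at hv
          rcases Finset.mem_union.1 hv with h' | h'
          · exact absurd h' h
          · exact h'
        have := hb1 v hv2
        omega
    · intro c v hv
      by_cases hc : c < A.dichrom
      · apply ha2 c v
        refine Relation.TransGen.mono ?_ _ _ hv
        rintro a b ⟨⟨haD, hac⟩, ⟨hbD, hbc⟩, hadj'⟩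
        have ha : a ∈ A.verts := by
          by_contra h
          simp only [h, if_false] at hac
          omega
        have hb : b ∈ A.verts := by
          by_contra h
          simp only [h, if_false] at hbc
          omega
        have hAadj : A.Adj a b := by
          rcases (hadj a b).1 hadj' with h | h | h | h
          · exact h
          · exact absurd (B.adj_mem h).1 (Finset.disjoint_left.1 hdis ha)
          · exact absurd h.2 (Finset.disjoint_left.1 hdis hb)
          · exact absurd h.1 (Finset.disjoint_left.1 hdis ha)
        refine ⟨⟨ha, ?_⟩, ⟨hb, ?_⟩, hAadj⟩
        · simpa only [ha, if_true] using hac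
        · simpa only [hb, if_true] using hbc
      · apply hb2 (c - A.dichrom) v
        refine Relation.TransGen.mono ?_ _ _ hv
        rintro a b ⟨⟨haD, hac⟩, ⟨hbD, hbc⟩, hadj'⟩
        have ha : a ∉ A.verts := by
          intro h
          simp only [h, if_true] at hac
          have := ha1 a h
          omega
        have hb : b ∉ A.verts := by
          intro h
          simp only [h, if_true] at hbc
          have := ha1 b h
          omega
        have haB : a ∈ B.verts := by
          rw [hverts] at haD
          rcases Finset.mem_union.1 haD with h' | h'
          · exact absurd h' ha
          · exact h'
        have hbB : b ∈ B.verts := by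
          rw [hverts] at hbD
          rcases Finset.mem_union.1 hbD with h' | h'
          · exact absurd h' hb
          · exact h'
        have hBadj : B.Adj a b := by
          rcases (hadj a b).1 hadj' with h | h | h | h
          · exact absurd (A.adj_mem h).1 ha
          · exact h
          · exact absurd h.1 ha
          · exact absurd h.2 hb
        simp only [ha, if_false] at hac
        simp only [hb, if_false] at hbc
        exact ⟨⟨haB, by omega⟩, ⟨hbB, by omega⟩, hBadj⟩
  · obtain ⟨φ, h1, h2⟩ := D.colorable_dichrom
    classical
    have hdisc : Disjoint (A.verts.image φ) (B.verts.image φ) := by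
      rw [Finset.disjoint_left]
      rintro c hc hc'
      obtain ⟨u, hu, hcu⟩ := Finset.mem_image.1 hc
      obtain ⟨v, hv, hcv⟩ := Finset.mem_image.1 hc'
      have hmu : u ∈ {w | w ∈ D.verts ∧ φ w = c} := ⟨hAD hu, hcu⟩
      have hmv : v ∈ {w | w ∈ D.verts ∧ φ w = c} := ⟨hBD hv, hcv⟩
      exact h2 c u
        (Relation.TransGen.head
          ⟨hmu, hmv, (hadj u v).2 (Or.inr (Or.inr (Or.inl ⟨hu, hv⟩)))⟩
          (Relation.TransGen.single
            ⟨hmv, hmu, (hadj v u).2 (Or.inr (Or.inr (Or.inr ⟨hv, hu⟩)))⟩))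
    have hA : A.dichrom ≤ (A.verts.image φ).card := by
      apply dichrom_le_card_image
      intro c v hv
      apply h2 c v
      refine Relation.TransGen.mono ?_ _ _ hv
      rintro a b ⟨⟨ha1, ha2⟩, ⟨hb1, hb2⟩, hadj'⟩
      exact ⟨⟨hAD ha1, ha2⟩, ⟨hAD hb1, hb2⟩, (hadj a b).2 (Or.inl hadj')⟩
    have hB : B.dichrom ≤ (B.verts.image φ).card := by
      apply dichrom_le_card_image
      intro c v hv
      apply h2 c v
      refine Relation.TransGen.mono ?_ _ _ hv
      rintro a b ⟨⟨ha1, ha2⟩, ⟨hb1, hb2⟩, hadj'⟩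
      exact ⟨⟨hBD ha1, ha2⟩, ⟨hBD hb1, hb2⟩, (hadj a b).2 (Or.inr (Or.inl hadj'))⟩
    have hsum : (A.verts.image φ).card + (B.verts.image φ).card ≤ D.dichrom := by
      rw [← Finset.card_union_of_disjoint hdisc]
      calc (A.verts.image φ ∪ B.verts.image φ).card
          ≤ (Finset.range D.dichrom).card := by
            apply Finset.card_le_card
            intro c hc
            rcases Finset.mem_union.1 hc with h | h
            · obtain ⟨u, hu, hcu⟩ := Finset.mem_image.1 h
              exact Finset.mem_range.2 (hcu ▸ h1 u (hAD hu))
            · obtain ⟨u, hu, hcu⟩ := Finset.mem_image.1 h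
              exact Finset.mem_range.2 (hcu ▸ h1 u (hBD hu))
        _ = D.dichrom := Finset.card_range _
    omega

lemma delVert_isSubdigraph (D : Digraph') (x : ℕ) : IsSubdigraph (D.delVert x) D :=
  ⟨Finset.erase_subset _ _, fun _ _ h => h.1⟩

lemma delArc_isSubdigraph (D : Digraph') (x y : ℕ) : IsSubdigraph (D.delArc x y) D :=
  ⟨Finset.Subset.refl _, fun _ _ h => h.1⟩

lemma delVert_ne {D : Digraph'} {x : ℕ} (hx : x ∈ D.verts) : D.delVert x ≠ D := by
  intro h
  have : (D.delVert x).verts = D.verts := congrArg verts h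
  have hx' : x ∉ (D.delVert x).verts := fun h' => (Finset.mem_erase.1 h').1 rfl
  rw [this] at hx'
  exact hx' hx

lemma delArc_ne {D : Digraph'} {x y : ℕ} (hxy : D.Adj x y) : D.delArc x y ≠ D := by
  intro h
  have : (D.delArc x y).Adj = D.Adj := congrArg Adj h
  have hx' : ¬ (D.delArc x y).Adj x y := fun h' => h'.2 ⟨rfl, rfl⟩
  rw [this] at hx'
  exact hx' hxy

lemma isDiracJoin_delVert_left {D A B : Digraph'} (hJ : IsDiracJoin D A B) {x : ℕ}
    (hx : x ∈ A.verts) : IsDiracJoin (D.delVert x) (A.delVert x) B := by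
  obtain ⟨hdis, hverts, hadj⟩ := hJ
  have hxB : x ∉ B.verts := Finset.disjoint_left.1 hdis hx
  refine ⟨Finset.disjoint_of_subset_left (Finset.erase_subset _ _) hdis, ?_, ?_⟩
  · show D.verts.erase x = A.verts.erase x ∪ B.verts
    rw [hverts]
    ext v
    simp only [Finset.mem_erase, Finset.mem_union]
    constructor
    · rintro ⟨hvx, hv | hv⟩
      · exact Or.inl ⟨hvx, hv⟩
      · exact Or.inr hv
    · rintro (⟨hvx, hv⟩ | hv)
      · exact ⟨hvx, Or.inl hv⟩
      · exact ⟨fun e => hxB (e ▸ hv), Or.inr hv⟩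
  · intro u v
    show (D.Adj u v ∧ u ≠ x ∧ v ≠ x) ↔ _
    rw [hadj]
    constructor
    · rintro ⟨h | h | ⟨h1, h2⟩ | ⟨h1, h2⟩, hux, hvx⟩
      · exact Or.inl ⟨h, hux, hvx⟩
      · exact Or.inr (Or.inl h)
      · exact Or.inr (Or.inr (Or.inl ⟨Finset.mem_erase.2 ⟨hux, h1⟩, h2⟩))
      · exact Or.inr (Or.inr (Or.inr ⟨h1, Finset.mem_erase.2 ⟨hvx, h2⟩⟩))
    · rintro (⟨h, hux, hvx⟩ | h | ⟨h1, h2⟩ | ⟨h1, h2⟩)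
      · exact ⟨Or.inl h, hux, hvx⟩
      · have hm := B.adj_mem h
        exact ⟨Or.inr (Or.inl h), fun e => hxB (e ▸ hm.1), fun e => hxB (e ▸ hm.2)⟩
      · have h1' := Finset.mem_erase.1 h1
        exact ⟨Or.inr (Or.inr (Or.inl ⟨h1'.2, h2⟩)), h1'.1, fun e => hxB (e ▸ h2)⟩
      · have h2' := Finset.mem_erase.1 h2
        exact ⟨Or.inr (Or.inr (Or.inr ⟨h1, h2'.2⟩)), fun e => hxB (e ▸ h1), h2'.1⟩

lemma isDiracJoin_delArc_left {D A B : Digraph'} (hJ : IsDiracJoin D A B) {x y : ℕ}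
    (hx : x ∈ A.verts) (hy : y ∈ A.verts) :
    IsDiracJoin (D.delArc x y) (A.delArc x y) B := by
  obtain ⟨hdis, hverts, hadj⟩ := hJ
  have hxB : x ∉ B.verts := Finset.disjoint_left.1 hdis hx
  have hyB : y ∉ B.verts := Finset.disjoint_left.1 hdis hy
  refine ⟨hdis, hverts, ?_⟩
  intro u v
  show (D.Adj u v ∧ ¬(u = x ∧ v = y)) ↔ _
  rw [hadj]
  constructor
  · rintro ⟨h | h | h | h, hne⟩
    · exact Or.inl ⟨h, hne⟩
    · exact Or.inr (Or.inl h)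
    · exact Or.inr (Or.inr (Or.inl h))
    · exact Or.inr (Or.inr (Or.inr h))
  · rintro (⟨h, hne⟩ | h | h | h)
    · exact ⟨Or.inl h, hne⟩
    · exact ⟨Or.inr (Or.inl h), fun he => hyB (he.2 ▸ (B.adj_mem h).2)⟩
    · exact ⟨Or.inr (Or.inr (Or.inl h)), fun he => hyB (he.2 ▸ h.2)⟩
    · exact ⟨Or.inr (Or.inr (Or.inr h)), fun he => hxB (he.1 ▸ h.1)⟩

lemma critical_left {D A B : Digraph'} (hJ : IsDiracJoin D A B) (hcrit : D.Critical) :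
    A.Critical := by
  intro H hsub hne
  have hdis' : Disjoint H.verts B.verts := Finset.disjoint_of_subset_left hsub.1 hJ.1
  set H' := mkJoin H B hdis' with hH'
  have hJ' : IsDiracJoin H' H B := isDiracJoin_mkJoin H B hdis'
  have hsub' : IsSubdigraph H' D := by
    constructor
    · rw [hJ.2.1]
      exact Finset.union_subset_union_left hsub.1
    · rintro u v (h | h | h | h)
      · exact (hJ.2.2 u v).2 (Or.inl (hsub.2 h))
      · exact (hJ.2.2 u v).2 (Or.inr (Or.inl h))
      · exact (hJ.2.2 u v).2 (Or.inr (Or.inr (Or.inl ⟨hsub.1 h.1, h.2⟩)))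
      · exact (hJ.2.2 u v).2 (Or.inr (Or.inr (Or.inr ⟨h.1, hsub.1 h.2⟩)))
  have hne' : H' ≠ D := by
    by_cases hv : H.verts = A.verts
    · have hAdjNe : ∃ u v, A.Adj u v ∧ ¬ H.Adj u v := by
        by_contra hc
        push_neg at hc
        exact hne (ext' hv fun u v => ⟨fun h => hsub.2 h, hc u v⟩)
      obtain ⟨u, v, hAuv, hHuv⟩ := hAdjNe
      intro he
      have hu : u ∈ A.verts := (A.adj_mem hAuv).1
      have hvv : v ∈ A.verts := (A.adj_mem hAuv).2
      have hD : D.Adj u v := (hJ.2.2 u v).2 (Or.inl hAuv)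
      have hH'uv : ¬ H'.Adj u v := by
        rintro (h | h | h | h)
        · exact hHuv h
        · exact Finset.disjoint_left.1 hJ.1 hu (B.adj_mem h).1
        · exact Finset.disjoint_left.1 hJ.1 hvv h.2
        · exact Finset.disjoint_left.1 hJ.1 hu h.1
      rw [he] at hH'uv
      exact hH'uv hD
    · have hss : H.verts ⊂ A.verts := Finset.ssubset_iff_subset_ne.2 ⟨hsub.1, hv⟩
      obtain ⟨w, hwA, hwH⟩ := Finset.exists_of_ssubset hss
      intro he
      have hwD : w ∈ D.verts := by
        rw [hJ.2.1]; exact Finset.mem_union_left _ hwA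
      have : w ∈ H'.verts := by rw [he]; exact hwD
      rcases Finset.mem_union.1 this with h | h
      · exact hwH h
      · exact Finset.disjoint_left.1 hJ.1 hwA h
  have hlt := hcrit H' hsub' hne'
  rw [dichrom_join hJ, dichrom_join hJ'] at hlt
  omega

lemma colorable_delArc_cross {D A B : Digraph'} (hJ : IsDiracJoin D A B)
    (hcA : A.Critical) (hcB : B.Critical) {x y : ℕ} (hx : x ∈ A.verts) (hy : y ∈ B.verts) :
    (D.delArc x y).Colorable (A.dichrom + B.dichrom - 1) := by
  classical
  obtain ⟨hdis, hverts, hadj⟩ := hJ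
  set k₁ := A.dichrom with hk1'
  set k₂ := B.dichrom with hk2'
  have hk₁ : 1 ≤ k₁ := one_le_dichrom ⟨x, hx⟩
  have hk₂ : 1 ≤ k₂ := one_le_dichrom ⟨y, hy⟩
  have hxy : x ≠ y := fun e => Finset.disjoint_left.1 hdis hx (e ▸ hy)
  have hxB : x ∉ B.verts := Finset.disjoint_left.1 hdis hx
  have hyA : y ∉ A.verts := fun h => Finset.disjoint_left.1 hdis h hy
  have hd1 : (A.delVert x).dichrom < k₁ := hcA _ (delVert_isSubdigraph A x) (delVert_ne hx)
  have hd2 : (B.delVert y).dichrom < k₂ := hcB _ (delVert_isSubdigraph B y) (delVert_ne hy)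
  obtain ⟨φ₁, ha1, ha2⟩ :=
    colorable_of_dichrom_le (show (A.delVert x).dichrom ≤ k₁ - 1 by omega)
  obtain ⟨φ₂, hb1, hb2⟩ :=
    colorable_of_dichrom_le (show (B.delVert y).dichrom ≤ k₂ - 1 by omega)
  set φ : ℕ → ℕ := fun v =>
    if v = x ∨ v = y then k₁ + k₂ - 2
    else if v ∈ A.verts then φ₁ v else (k₁ - 1) + φ₂ v with hφ
  have hmemB : ∀ w : ℕ, w ∈ D.verts → w ∉ A.verts → w ∈ B.verts := by
    intro w hw hwA
    rw [hverts] at hw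
    rcases Finset.mem_union.1 hw with h | h
    · exact absurd h hwA
    · exact h
  refine ⟨φ, ?_, ?_⟩
  · intro v hv
    have hv' : v ∈ D.verts := hv
    by_cases hsp : v = x ∨ v = y
    · rw [hφ]; simp only [hsp, if_true]; omega
    · push_neg at hsp
      rw [hφ]
      simp only [hsp.1, hsp.2, or_self, if_false]
      by_cases hA : v ∈ A.verts
      · simp only [hA, if_true]
        have := ha1 v (Finset.mem_erase.2 ⟨hsp.1, hA⟩)
        omega
      · simp only [hA, if_false]
        have := hb1 v (Finset.mem_erase.2 ⟨hsp.2, hmemB v hv' hA⟩)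
        omega
  · intro c
    by_cases hcc1 : c < k₁ - 1
    · intro v hv
      apply ha2 c v
      refine Relation.TransGen.mono ?_ _ _ hv
      rintro a b ⟨⟨haD, hac⟩, ⟨hbD, hbc⟩, hDab, hne⟩
      have haD' : a ∈ D.verts := haD
      have hbD' : b ∈ D.verts := hbD
      have hax : ¬ (a = x ∨ a = y) := by
        intro h
        simp only [hφ, h, if_true] at hac
        omega
      have hbx : ¬ (b = x ∨ b = y) := by
        intro h
        simp only [hφ, h, if_true] at hbc
        omega
      simp only [hφ] at hac
      rw [if_neg hax] at hac
      simp only [hφ] at hbc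
      rw [if_neg hbx] at hbc
      have haA : a ∈ A.verts := by
        by_contra h
        rw [if_neg h] at hac
        omega
      have hbA : b ∈ A.verts := by
        by_contra h
        rw [if_neg h] at hbc
        omega
      rw [if_pos haA] at hac
      rw [if_pos hbA] at hbc
      push_neg at hax hbx
      have hAadj : A.Adj a b := by
        rcases (hadj a b).1 hDab with h | h | h | h
        · exact h
        · exact absurd (B.adj_mem h).1 (Finset.disjoint_left.1 hdis haA)
        · exact absurd h.2 (Finset.disjoint_left.1 hdis hbA)
        · exact absurd h.1 (Finset.disjoint_left.1 hdis haA)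
      exact ⟨⟨Finset.mem_erase.2 ⟨hax.1, haA⟩, hac⟩,
        ⟨Finset.mem_erase.2 ⟨hbx.1, hbA⟩, hbc⟩, hAadj, hax.1, hbx.1⟩
    · by_cases hcc2 : c < k₁ + k₂ - 2
      · intro v hv
        apply hb2 (c - (k₁ - 1)) v
        refine Relation.TransGen.mono ?_ _ _ hv
        rintro a b ⟨⟨haD, hac⟩, ⟨hbD, hbc⟩, hDab, hne⟩
        have haD' : a ∈ D.verts := haD
        have hbD' : b ∈ D.verts := hbD
        have hax : ¬ (a = x ∨ a = y) := by
          intro h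
          simp only [hφ, h, if_true] at hac
          omega
        have hbx : ¬ (b = x ∨ b = y) := by
          intro h
          simp only [hφ, h, if_true] at hbc
          omega
        simp only [hφ] at hac
        rw [if_neg hax] at hac
        simp only [hφ] at hbc
        rw [if_neg hbx] at hbc
        have haA : a ∉ A.verts := by
          intro h
          rw [if_pos h] at hac
          have := ha1 a (Finset.mem_erase.2 ⟨fun e => hax (Or.inl e), h⟩)
          omega
        have hbA : b ∉ A.verts := by
          intro h
          rw [if_pos h] at hbc
          have := ha1 b (Finset.mem_erase.2 ⟨fun e => hbx (Or.inl e), h⟩)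
          omega
        rw [if_neg haA] at hac
        rw [if_neg hbA] at hbc
        push_neg at hax hbx
        have haB : a ∈ B.verts := hmemB a haD' haA
        have hbB : b ∈ B.verts := hmemB b hbD' hbA
        have hBadj : B.Adj a b := by
          rcases (hadj a b).1 hDab with h | h | h | h
          · exact absurd (A.adj_mem h).1 haA
          · exact h
          · exact absurd h.1 haA
          · exact absurd h.2 hbA
        exact ⟨⟨Finset.mem_erase.2 ⟨hax.2, haB⟩, by omega⟩,
          ⟨Finset.mem_erase.2 ⟨hbx.2, hbB⟩, by omega⟩, hBadj, hax.2, hbx.2⟩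
      · intro v hv
        have hmem : ∀ w : ℕ, w ∈ D.verts → φ w = c → w = x ∨ w = y := by
          intro w hw hwc
          by_contra hcon
          simp only [hφ] at hwc
          rw [if_neg hcon] at hwc
          push_neg at hcon
          by_cases hA : w ∈ A.verts
          · rw [if_pos hA] at hwc
            have := ha1 w (Finset.mem_erase.2 ⟨hcon.1, hA⟩)
            omega
          · rw [if_neg hA] at hwc
            have := hb1 w (Finset.mem_erase.2 ⟨hcon.2, hmemB w hw hA⟩)
            omega
        have hstep : ∀ a b : ℕ,
            (a ∈ {w | w ∈ (D.delArc x y).verts ∧ φ w = c} ∧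
             b ∈ {w | w ∈ (D.delArc x y).verts ∧ φ w = c} ∧
             (D.delArc x y).Adj a b) → a = y ∧ b = x := by
          rintro a b ⟨⟨haD, hac⟩, ⟨hbD, hbc⟩, hDab, hne⟩
          have ha := hmem a haD hac
          have hb := hmem b hbD hbc
          rcases ha with rfl | rfl <;> rcases hb with hb | hb
          · exact absurd (hb ▸ hDab) (D.loopless _)
          · exact absurd ⟨rfl, hb⟩ hne
          · exact ⟨rfl, hb⟩
          · exact absurd (hb ▸ hDab) (D.loopless _)
        have hkey : ∀ a b : ℕ,
            Relation.TransGen (fun a b =>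
              a ∈ {w | w ∈ (D.delArc x y).verts ∧ φ w = c} ∧
              b ∈ {w | w ∈ (D.delArc x y).verts ∧ φ w = c} ∧
              (D.delArc x y).Adj a b) a b → a = y ∧ b = x := by
          intro a b hab
          induction hab with
          | single hs => exact hstep _ _ hs
          | tail _ hs ih =>
            have h2 := hstep _ _ hs
            exact absurd (ih.2.symm.trans h2.1) hxy
        have := hkey v v hv
        exact hxy (this.2.symm.trans this.1)

end Digraph'

/-- The Dirac join of two disjoint non-empty digraphs is critical iff both parts
are critical. -/
theorem stmt9 (D D₁ D₂ : Digraph') (h1 : D₁.verts.Nonempty) (h2 : D₂.verts.Nonempty)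
    (hJ : Digraph'.IsDiracJoin D D₁ D₂) :
    D.Critical ↔ (D₁.Critical ∧ D₂.Critical) := by
  have hd := dichrom_join hJ
  constructor
  · intro hcrit
    exact ⟨critical_left hJ hcrit, critical_left (join_symm hJ) hcrit⟩
  · rintro ⟨hc1, hc2⟩
    have hk₁ := one_le_dichrom h1
    have hk₂ := one_le_dichrom h2
    intro H hsub hne
    rw [hd]
    by_cases hv : H.verts = D.verts
    · have hex : ∃ u v, D.Adj u v ∧ ¬ H.Adj u v := by
        by_contra hc
        push_neg at hc
        exact hne (ext' hv fun u v => ⟨fun h => hsub.2 h, hc u v⟩)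
      obtain ⟨u, v, hDuv, hHuv⟩ := hex
      have hle : H.dichrom ≤ (D.delArc u v).dichrom := by
        apply dichrom_mono
        constructor
        · intro a ha
          rw [hv] at ha
          exact ha
        · intro a b h
          refine ⟨hsub.2 h, ?_⟩
          rintro ⟨rfl, rfl⟩
          exact hHuv h
      have hlt : (D.delArc u v).dichrom < D₁.dichrom + D₂.dichrom := by
        rcases (hJ.2.2 u v).1 hDuv with h | h | h | h
        · have hJ' := isDiracJoin_delArc_left hJ (D₁.adj_mem h).1 (D₁.adj_mem h).2
          rw [dichrom_join hJ']
          have := hc1 _ (delArc_isSubdigraph D₁ u v) (delArc_ne h)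
          omega
        · have hJ' := isDiracJoin_delArc_left (join_symm hJ) (D₂.adj_mem h).1 (D₂.adj_mem h).2
          rw [dichrom_join hJ']
          have := hc2 _ (delArc_isSubdigraph D₂ u v) (delArc_ne h)
          omega
        · have := dichrom_le_of_colorable (colorable_delArc_cross hJ hc1 hc2 h.1 h.2)
          omega
        · have := dichrom_le_of_colorable
            (colorable_delArc_cross (join_symm hJ) hc2 hc1 h.1 h.2)
          omega
      omega
    · have hss : H.verts ⊂ D.verts := Finset.ssubset_iff_subset_ne.2 ⟨hsub.1, hv⟩
      obtain ⟨w, hwD, hwH⟩ := Finset.exists_of_ssubset hss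
      have hle : H.dichrom ≤ (D.delVert w).dichrom := by
        apply dichrom_mono
        constructor
        · intro a ha
          exact Finset.mem_erase.2 ⟨fun e => hwH (e ▸ ha), hsub.1 ha⟩
        · intro a b h
          have hm := H.adj_mem h
          exact ⟨hsub.2 h, fun e => hwH (e ▸ hm.1), fun e => hwH (e ▸ hm.2)⟩
      have hlt : (D.delVert w).dichrom < D₁.dichrom + D₂.dichrom := by
        rw [hJ.2.1] at hwD
        rcases Finset.mem_union.1 hwD with h | h
        · rw [dichrom_join (isDiracJoin_delVert_left hJ h)]
          have := hc1 _ (delVert_isSubdigraph D₁ w) (delVert_ne h)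
          omega
        · rw [dichrom_join (isDiracJoin_delVert_left (join_symm hJ) h)]
          have := hc2 _ (delVert_isSubdigraph D₂ w) (delVert_ne h)
          omega
      omega
end
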